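/- Define F(n,k) = (-1)^n [3n-2k+1] · binom_q(2n-2k,n) · (q;q^2)_n (q;q^2)_{n-k} / ((q;q)_n (q^2;q^2)_{n-k}) and G(n,k) = (-1)^{n+1} [n] · binom_q(2n-2k,n-1) · (q;q^2)_n (q;q^2)_{n-k} · q^{n+1-2k} / ((q;q)_n (q^2;q^2)_{n-k}), where binom_q(M,N) = 0 if N < 0 or N > M. Then for all integers n ≥ 0 and k ≥ 1 with n ≥ k, F(n,k-1) - F(n,k) = G(n+1,k) - G(n,k). -/

import Mathlib

open Polynomial Finset

noncomputable def q : RatFunc ℚ := RatFunc.X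

/-- `qpoch a b m = (a;b)_m = ∏_{j=0}^{m-1} (1 - a b^j)`. -/
noncomputable def qpoch (a b : RatFunc ℚ) (m : ℕ) : RatFunc ℚ :=
  ∏ j ∈ Finset.range m, (1 - a * b ^ j)

/-- The q-integer `[m] = (1-q^m)/(1-q)` for any integer `m`. -/
noncomputable def qint (m : ℤ) : RatFunc ℚ := (1 - q ^ m) / (1 - q)

/-- Gaussian binomial coefficient in base `b`. -/
noncomputable def qbin (b : RatFunc ℚ) (M N : ℕ) : RatFunc ℚ :=
  if N ≤ M then qpoch b b M / (qpoch b b N * qpoch b b (M - N)) else 0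

/-- `C2 a = a(a-1)/2`. -/
def C2 (a : ℤ) : ℤ := a * (a - 1) / 2

/-- The polynomial `[n] = 1 + q + ... + q^{n-1}` in `ℚ[q]`. -/
noncomputable def qnPoly (n : ℕ) : Polynomial ℚ := ∑ i ∈ Finset.range n, X ^ i

/-- Congruence of rational functions modulo a polynomial: the reduced numerator of the
difference is divisible by `P` and the reduced denominator is coprime to `P`. -/
def congrMod (x y : RatFunc ℚ) (P : Polynomial ℚ) : Prop :=
  P ∣ (x - y).num ∧ IsCoprime ((x - y).denom) P

noncomputable def F15 (n k : ℕ) : RatFunc ℚ :=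
  (-1) ^ n * qint (3 * (n : ℤ) - 2 * k + 1) * qbin q (2 * n - 2 * k) n *
    (qpoch q (q ^ 2) n * qpoch q (q ^ 2) (n - k)) /
    (qpoch q q n * qpoch (q ^ 2) (q ^ 2) (n - k))

noncomputable def G15 (n k : ℕ) : RatFunc ℚ :=
  (-1) ^ (n + 1) * qint (n : ℤ) * qbin q (2 * n - 2 * k) (n - 1) *
    (qpoch q (q ^ 2) n * qpoch q (q ^ 2) (n - k)) * q ^ ((n : ℤ) + 1 - 2 * k) /
    (qpoch q q n * qpoch (q ^ 2) (q ^ 2) (n - k))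

lemma q_pow_ne_one (m : ℕ) (hm : 1 ≤ m) : (q : RatFunc ℚ) ^ m ≠ 1 := by
  intro h
  have h2 : (algebraMap ℚ[X] (RatFunc ℚ)) (Polynomial.X ^ m) = (algebraMap ℚ[X] (RatFunc ℚ)) 1 := by
    simpa [q, map_pow, RatFunc.algebraMap_X] using h
  have h3 := RatFunc.algebraMap_injective (K := ℚ) h2
  have := congrArg Polynomial.natDegree h3
  simp [Polynomial.natDegree_X_pow] at this
  omega
lemma one_sub_q_pow_ne (m : ℕ) (hm : 1 ≤ m) : (1 : RatFunc ℚ) - q ^ m ≠ 0 := by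
  intro h; exact q_pow_ne_one m hm (sub_eq_zero.mp h).symm
lemma qpoch_zero (a b : RatFunc ℚ) : qpoch a b 0 = 1 := Finset.prod_range_zero _
lemma qpoch_succ (a b : RatFunc ℚ) (m : ℕ) :
    qpoch a b (m + 1) = qpoch a b m * (1 - a * b ^ m) := Finset.prod_range_succ _ _
lemma qpoch_ne_zero {a b : RatFunc ℚ} {m : ℕ} (h : ∀ j < m, (1:RatFunc ℚ) - a * b ^ j ≠ 0) :
    qpoch a b m ≠ 0 := by
  rw [qpoch, Finset.prod_ne_zero_iff]; intro j hj; exact h j (Finset.mem_range.mp hj)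
lemma P1_ne (m : ℕ) : qpoch q q m ≠ 0 := by
  apply qpoch_ne_zero; intro j _
  have : q * q ^ j = q ^ (j+1) := by ring
  rw [this]; exact one_sub_q_pow_ne _ (by omega)
lemma P2_ne (m : ℕ) : qpoch (q^2) (q^2) m ≠ 0 := by
  apply qpoch_ne_zero; intro j _
  have : q^2 * (q^2) ^ j = q ^ (2*j+2) := by ring
  rw [this]; exact one_sub_q_pow_ne _ (by omega)
lemma Podd_ne (m : ℕ) : qpoch q (q^2) m ≠ 0 := by
  apply qpoch_ne_zero; intro j _
  have : q * (q^2) ^ j = q ^ (2*j+1) := by ring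
  rw [this]; exact one_sub_q_pow_ne _ (by omega)
lemma one_sub_q_ne : (1 : RatFunc ℚ) - q ≠ 0 := by simpa using one_sub_q_pow_ne 1 le_rfl
lemma qbin_eq (M N : ℕ) (h : N ≤ M) :
    qbin q M N = qpoch q q M / (qpoch q q N * qpoch q q (M - N)) := if_pos h
lemma qint_natCast (m : ℕ) : qint (m : ℤ) = (1 - q ^ m) / (1 - q) := by rw [qint, zpow_natCast]
lemma F15_zero (n k : ℕ) (h : ¬ n ≤ 2*n - 2*k) : F15 n k = 0 := by
  rw [F15, qbin, if_neg h]; simp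
lemma G15_zero (n k : ℕ) (h : ¬ n - 1 ≤ 2*n - 2*k) : G15 n k = 0 := by
  rw [G15, qbin, if_neg h]; simp
lemma neg_one_pow_shift (a b : ℕ) : (-1 : RatFunc ℚ) ^ (2*a + b) = (-1) ^ b := by
  rw [pow_add, pow_mul]; norm_num
lemma P1_succ (m : ℕ) : qpoch q q (m + 1) = qpoch q q m * (1 - q ^ (m+1)) := by
  rw [qpoch_succ]; ring
lemma P2_succ (m : ℕ) : qpoch (q^2) (q^2) (m + 1) = qpoch (q^2) (q^2) m * (1 - q ^ (2*m+2)) := by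
  rw [qpoch_succ]; ring
lemma Podd_succ (m : ℕ) : qpoch q (q^2) (m + 1) = qpoch q (q^2) m * (1 - q ^ (2*m+1)) := by
  rw [qpoch_succ]; ring

lemma qpoch_one' (a b : RatFunc ℚ) : qpoch a b 1 = 1 - a := by
  simp [qpoch, Finset.prod_range_one]

lemma hF (s x y z w v u N D : RatFunc ℚ) (hy : y ≠ 0) (hw : w ≠ 0) (hu : u ≠ 0) (hD : D ≠ 0)
    (h : s * x * z * v * D = N * (y * (w * u))) :
    s * (x / y) * (z / w) * v / u = N / D := by
  rw [div_eq_div_iff hu hD]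
  field_simp
  linear_combination h

lemma hG (s x y z w v p u N D : RatFunc ℚ) (hy : y ≠ 0) (hw : w ≠ 0) (hu : u ≠ 0) (hD : D ≠ 0)
    (h : s * x * z * v * p * D = N * (y * (w * u))) :
    s * (x / y) * (z / w) * v * p / u = N / D := by
  rw [div_eq_div_iff hu hD]
  field_simp
  linear_combination h

lemma hH (x y v u N D : RatFunc ℚ) (hy : y ≠ 0) (hu : u ≠ 0) (hD : D ≠ 0)
    (h : x * v * D = N * (y * u)) :
    x / y * v / u = N / D := by
  rw [div_eq_div_iff hu hD]
  field_simp
  linear_combination h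

set_option maxHeartbeats 1000000 in
lemma caseA (j d : ℕ) :
    F15 (2*j+2+d) j - F15 (2*j+2+d) (j+1)
      = G15 (2*j+2+d+1) (j+1) - G15 (2*j+2+d) (j+1) := by
  rw [F15, F15, G15, G15]
  rw [show (3 * ((2*j+2+d : ℕ) : ℤ) - 2 * ((j : ℕ) : ℤ) + 1) = ((4*j+3*d+7 : ℕ) : ℤ) by
    push_cast; ring]
  rw [show (3 * ((2*j+2+d : ℕ) : ℤ) - 2 * ((j+1 : ℕ) : ℤ) + 1) = ((4*j+3*d+5 : ℕ) : ℤ) by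
    push_cast; ring]
  rw [qint_natCast, qint_natCast, qint_natCast, qint_natCast]
  rw [show ((2*j+2+d+1 : ℕ) : ℤ) + 1 - 2 * ((j+1 : ℕ) : ℤ) = ((d+2 : ℕ) : ℤ) by
    push_cast; ring]
  rw [show ((2*j+2+d : ℕ) : ℤ) + 1 - 2 * ((j+1 : ℕ) : ℤ) = ((d+1 : ℕ) : ℤ) by
    push_cast; ring]
  rw [zpow_natCast, zpow_natCast]
  rw [show 2*(2*j+2+d) - 2*j = 2*j+4+2*d from by omega]
  rw [show 2*(2*j+2+d) - 2*(j+1) = 2*j+2+2*d from by omega]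
  rw [show 2*(2*j+2+d+1) - 2*(j+1) = 2*j+4+2*d from by omega]
  rw [show (2*j+2+d) - j = j+2+d from by omega]
  rw [show (2*j+2+d) - (j+1) = j+1+d from by omega]
  rw [show (2*j+2+d+1) - (j+1) = j+2+d from by omega]
  rw [show (2*j+2+d+1) - 1 = 2*j+2+d from by omega]
  rw [show (2*j+2+d) - 1 = 2*j+1+d from by omega]
  rw [qbin_eq _ _ (by omega), qbin_eq _ _ (by omega), qbin_eq _ _ (by omega)]
  rw [show (2*j+4+2*d) - (2*j+2+d) = d+2 from by omega]
  rw [show (2*j+2+2*d) - (2*j+2+d) = d from by omega]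
  rw [show (2*j+2+2*d) - (2*j+1+d) = d+1 from by omega]
  have s1 : (-1 : RatFunc ℚ) ^ (2*j+2+d) = (-1)^d := by
    rw [show 2*j+2+d = 2*(j+1)+d from by ring, neg_one_pow_shift]
  have s2 : (-1 : RatFunc ℚ) ^ (2*j+2+d+1+1) = (-1)^d := by
    rw [show 2*j+2+d+1+1 = 2*(j+2)+d from by ring, neg_one_pow_shift]
  have s3 : (-1 : RatFunc ℚ) ^ (2*j+2+d+1) = (-1)^(d+1) := by
    rw [show 2*j+2+d+1 = 2*(j+1)+(d+1) from by ring, neg_one_pow_shift]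
  rw [s2, s3, s1]
  -- expansions
  have eP1n : qpoch q q (2*j+2+d) = qpoch q q (2*j+1+d) * (1 - q^(2*j+2+d)) := by
    rw [show 2*j+2+d = (2*j+1+d)+1 from by omega, P1_succ]
  have eP1n1 : qpoch q q (2*j+2+d+1)
      = qpoch q q (2*j+1+d) * (1 - q^(2*j+2+d)) * (1 - q^(2*j+3+d)) := by
    rw [P1_succ, eP1n]; ring
  have eL2 : qpoch q q (2*j+4+2*d)
      = qpoch q q (2*j+2+2*d) * (1 - q^(2*j+3+2*d)) * (1 - q^(2*j+4+2*d)) := by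
    rw [show 2*j+4+2*d = ((2*j+2+2*d)+1)+1 from by omega, P1_succ, P1_succ]; ring
  have eDd1 : qpoch q q (d+1) = qpoch q q d * (1 - q^(d+1)) := P1_succ d
  have eDd2 : qpoch q q (d+2) = qpoch q q d * (1 - q^(d+1)) * (1 - q^(d+2)) := by
    rw [show d+2 = (d+1)+1 from by omega, P1_succ, P1_succ]
  have eOn1 : qpoch q (q^2) (2*j+2+d+1) = qpoch q (q^2) (2*j+2+d) * (1 - q^(4*j+5+2*d)) := by
    rw [Podd_succ]; ring_nf
  have eOt1 : qpoch q (q^2) (j+2+d) = qpoch q (q^2) (j+1+d) * (1 - q^(2*j+3+2*d)) := by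
    rw [show j+2+d = (j+1+d)+1 from by omega, Podd_succ]; ring_nf
  have eEt1 : qpoch (q^2) (q^2) (j+2+d) = qpoch (q^2) (q^2) (j+1+d) * (1 - q^(2*j+4+2*d)) := by
    rw [show j+2+d = (j+1+d)+1 from by omega, P2_succ]; ring_nf
  have hD : ((1-q) * (qpoch q q (2*j+1+d) * qpoch q q (2*j+1+d)) * ((1 - q^(2*j+2+d)) * (1 - q^(2*j+2+d))) * (1 - q^(2*j+3+d)) * qpoch q q d * (1 - q^(d+1)) * (1 - q^(d+2)) * qpoch (q^2) (q^2) (j+1+d) * (1 - q^(2*j+4+2*d))) ≠ 0 := by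
    repeat' apply mul_ne_zero
    all_goals first
      | exact one_sub_q_ne
      | exact P1_ne _
      | exact P2_ne _
      | exact Podd_ne _
      | exact one_sub_q_pow_ne _ (by omega)
  have t1 := hF ((-1:RatFunc ℚ)^d) (1 - q^(4*j+3*d+7)) (1-q) (qpoch q q (2*j+4+2*d))
      (qpoch q q (2*j+2+d) * qpoch q q (d+2))
      (qpoch q (q^2) (2*j+2+d) * qpoch q (q^2) (j+2+d))
      (qpoch q q (2*j+2+d) * qpoch (q^2) (q^2) (j+2+d))
      ((-1:RatFunc ℚ)^d * (1 - q^(4*j+3*d+7)) * (qpoch q q (2*j+2+2*d) * (1 - q^(2*j+3+2*d)) * (1 - q^(2*j+4+2*d))) * (qpoch q (q^2) (2*j+2+d) * (qpoch q (q^2) (j+1+d) * (1 - q^(2*j+3+2*d)))) * (1 - q^(2*j+3+d)))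
      ((1-q) * (qpoch q q (2*j+1+d) * qpoch q q (2*j+1+d)) * ((1 - q^(2*j+2+d)) * (1 - q^(2*j+2+d))) * (1 - q^(2*j+3+d)) * qpoch q q d * (1 - q^(d+1)) * (1 - q^(d+2)) * qpoch (q^2) (q^2) (j+1+d) * (1 - q^(2*j+4+2*d)))
      one_sub_q_ne (mul_ne_zero (P1_ne _) (P1_ne _))
      (mul_ne_zero (P1_ne _) (P2_ne _)) hD
      (by rw [eL2, eOt1, eEt1, eP1n, eDd2]; ring)
  have t2 := hF ((-1:RatFunc ℚ)^d) (1 - q^(4*j+3*d+5)) (1-q) (qpoch q q (2*j+2+2*d))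
      (qpoch q q (2*j+2+d) * qpoch q q d)
      (qpoch q (q^2) (2*j+2+d) * qpoch q (q^2) (j+1+d))
      (qpoch q q (2*j+2+d) * qpoch (q^2) (q^2) (j+1+d))
      ((-1:RatFunc ℚ)^d * (1 - q^(4*j+3*d+5)) * qpoch q q (2*j+2+2*d) * (qpoch q (q^2) (2*j+2+d) * qpoch q (q^2) (j+1+d)) * ((1 - q^(2*j+3+d)) * (1 - q^(d+1)) * (1 - q^(d+2)) * (1 - q^(2*j+4+2*d))))
      ((1-q) * (qpoch q q (2*j+1+d) * qpoch q q (2*j+1+d)) * ((1 - q^(2*j+2+d)) * (1 - q^(2*j+2+d))) * (1 - q^(2*j+3+d)) * qpoch q q d * (1 - q^(d+1)) * (1 - q^(d+2)) * qpoch (q^2) (q^2) (j+1+d) * (1 - q^(2*j+4+2*d)))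
      one_sub_q_ne (mul_ne_zero (P1_ne _) (P1_ne _))
      (mul_ne_zero (P1_ne _) (P2_ne _)) hD
      (by rw [eP1n]; ring)
  have t3 := hG ((-1:RatFunc ℚ)^d) (1 - q^(2*j+2+d+1)) (1-q) (qpoch q q (2*j+4+2*d))
      (qpoch q q (2*j+2+d) * qpoch q q (d+2))
      (qpoch q (q^2) (2*j+2+d+1) * qpoch q (q^2) (j+2+d)) (q^(d+2))
      (qpoch q q (2*j+2+d+1) * qpoch (q^2) (q^2) (j+2+d))
      ((-1:RatFunc ℚ)^d * (1 - q^(2*j+3+d)) * (qpoch q q (2*j+2+2*d) * (1 - q^(2*j+3+2*d)) * (1 - q^(2*j+4+2*d))) * ((qpoch q (q^2) (2*j+2+d) * (1 - q^(4*j+5+2*d))) * (qpoch q (q^2) (j+1+d) * (1 - q^(2*j+3+2*d)))) * q^(d+2))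
      ((1-q) * (qpoch q q (2*j+1+d) * qpoch q q (2*j+1+d)) * ((1 - q^(2*j+2+d)) * (1 - q^(2*j+2+d))) * (1 - q^(2*j+3+d)) * qpoch q q d * (1 - q^(d+1)) * (1 - q^(d+2)) * qpoch (q^2) (q^2) (j+1+d) * (1 - q^(2*j+4+2*d)))
      one_sub_q_ne (mul_ne_zero (P1_ne _) (P1_ne _))
      (mul_ne_zero (P1_ne _) (P2_ne _)) hD
      (by rw [eL2, eOn1, eOt1, eEt1, eP1n1, eP1n, eDd2]; ring)
  have t4 := hG ((-1:RatFunc ℚ)^(d+1)) (1 - q^(2*j+2+d)) (1-q) (qpoch q q (2*j+2+2*d))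
      (qpoch q q (2*j+1+d) * qpoch q q (d+1))
      (qpoch q (q^2) (2*j+2+d) * qpoch q (q^2) (j+1+d)) (q^(d+1))
      (qpoch q q (2*j+2+d) * qpoch (q^2) (q^2) (j+1+d))
      ((-1:RatFunc ℚ)^(d+1) * (1 - q^(2*j+2+d)) * qpoch q q (2*j+2+2*d) * (qpoch q (q^2) (2*j+2+d) * qpoch q (q^2) (j+1+d)) * q^(d+1) * ((1 - q^(2*j+2+d)) * (1 - q^(2*j+3+d)) * (1 - q^(d+2)) * (1 - q^(2*j+4+2*d))))
      ((1-q) * (qpoch q q (2*j+1+d) * qpoch q q (2*j+1+d)) * ((1 - q^(2*j+2+d)) * (1 - q^(2*j+2+d))) * (1 - q^(2*j+3+d)) * qpoch q q d * (1 - q^(d+1)) * (1 - q^(d+2)) * qpoch (q^2) (q^2) (j+1+d) * (1 - q^(2*j+4+2*d)))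
      one_sub_q_ne (mul_ne_zero (P1_ne _) (P1_ne _))
      (mul_ne_zero (P1_ne _) (P2_ne _)) hD
      (by rw [eDd1, eP1n]; ring)
  rw [t1, t2, t3, t4, div_sub_div_same, div_sub_div_same]
  congr 1
  ring

set_option maxHeartbeats 1000000 in
lemma caseB (j : ℕ) :
    F15 (2*j+1) j - F15 (2*j+1) (j+1)
      = G15 (2*j+1+1) (j+1) - G15 (2*j+1) (j+1) := by
  rw [F15_zero (2*j+1) (j+1) (by omega)]
  rw [F15, G15, G15]
  rw [show (3 * ((2*j+1 : ℕ) : ℤ) - 2 * ((j : ℕ) : ℤ) + 1) = ((4*j+4 : ℕ) : ℤ) by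
    push_cast; ring]
  rw [qint_natCast, qint_natCast, qint_natCast]
  rw [show ((2*j+1+1 : ℕ) : ℤ) + 1 - 2 * ((j+1 : ℕ) : ℤ) = ((1 : ℕ) : ℤ) by push_cast; ring]
  rw [show ((2*j+1 : ℕ) : ℤ) + 1 - 2 * ((j+1 : ℕ) : ℤ) = ((0 : ℕ) : ℤ) by push_cast; ring]
  rw [zpow_natCast, zpow_natCast, pow_zero, pow_one]
  rw [show 2*(2*j+1) - 2*j = 2*j+2 from by omega]
  rw [show 2*(2*j+1+1) - 2*(j+1) = 2*j+2 from by omega]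
  rw [show 2*(2*j+1) - 2*(j+1) = 2*j from by omega]
  rw [show (2*j+1) - j = j+1 from by omega]
  rw [show (2*j+1+1) - (j+1) = j+1 from by omega]
  rw [show (2*j+1) - (j+1) = j from by omega]
  rw [show (2*j+1+1) - 1 = 2*j+1 from by omega]
  rw [show (2*j+1) - 1 = 2*j from by omega]
  rw [qbin_eq _ _ (by omega), qbin_eq _ _ (by omega)]
  rw [show (2*j+2) - (2*j+1) = 1 from by omega]
  rw [show (2*j) - (2*j) = 0 from by omega]
  simp only [qpoch_zero, qpoch_one', mul_one]
  rw [div_self (P1_ne (2*j))]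
  have s1 : (-1 : RatFunc ℚ) ^ (2*j+1) = -1 := by
    rw [neg_one_pow_shift, pow_one]
  have s2 : (-1 : RatFunc ℚ) ^ (2*j+1+1) = 1 := by
    rw [show 2*j+1+1 = 2*(j+1)+0 from by ring, neg_one_pow_shift, pow_zero]
  have s3 : (-1 : RatFunc ℚ) ^ (2*j+1+1+1) = -1 := by
    rw [show 2*j+1+1+1 = 2*(j+1)+1 from by ring, neg_one_pow_shift, pow_one]
  rw [s1, s2, s3]
  simp only [one_mul, mul_one]
  -- expansions (to be used inside side conditions)
  have e1 : qpoch q q (2*j+1) = qpoch q q (2*j) * (1 - q ^ (2*j+1)) := P1_succ (2*j)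
  have e2 : qpoch q q (2*j+2) = qpoch q q (2*j) * (1 - q ^ (2*j+1)) * (1 - q ^ (2*j+2)) := by
    rw [show 2*j+2 = ((2*j)+1)+1 from by omega, P1_succ, P1_succ]
  have e2' : qpoch q q (2*j+1+1) = qpoch q q (2*j) * (1 - q ^ (2*j+1)) * (1 - q ^ (2*j+2)) := e2
  have e3 : qpoch q (q^2) (2*j+1+1) = qpoch q (q^2) (2*j+1) * (1 - q ^ (4*j+3)) := by
    rw [Podd_succ]; ring_nf
  have e4 : qpoch q (q^2) (j+1) = qpoch q (q^2) j * (1 - q ^ (2*j+1)) := Podd_succ j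
  have e5 : qpoch (q^2) (q^2) (j+1) = qpoch (q^2) (q^2) j * (1 - q ^ (2*j+2)) := P2_succ j
  set B := qpoch q q (2*j) with hB
  set Po := qpoch q (q^2) (2*j+1) with hPo
  set Pj := qpoch q (q^2) j with hPj
  set E := qpoch (q^2) (q^2) j with hE
  have hD : (1-q) * (1-q) * B * B * (1 - q^(2*j+1)) * (1 - q^(2*j+1)) * (1 - q^(2*j+2)) * (1 - q^(2*j+2)) * E ≠ 0 := by
    repeat' apply mul_ne_zero
    all_goals first
      | exact one_sub_q_ne
      | exact P1_ne _
      | exact P2_ne _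
      | exact Podd_ne _
      | exact one_sub_q_pow_ne _ (by omega)
  have t1 := hF (-1) (1 - q^(4*j+4)) (1-q) (qpoch q q (2*j+2)) (qpoch q q (2*j+1) * (1-q))
      (Po * qpoch q (q^2) (j+1)) (qpoch q q (2*j+1) * qpoch (q^2) (q^2) (j+1))
      (-((1 - q^(4*j+4)) * B * (1 - q^(2*j+1)) * (1 - q^(2*j+1)) * (1 - q^(2*j+2)) * (1 - q^(2*j+2)) * Po * Pj))
      ((1-q) * (1-q) * B * B * (1 - q^(2*j+1)) * (1 - q^(2*j+1)) * (1 - q^(2*j+2)) * (1 - q^(2*j+2)) * E)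
      one_sub_q_ne (mul_ne_zero (P1_ne _) one_sub_q_ne)
      (mul_ne_zero (P1_ne _) (P2_ne _)) hD
      (by rw [e1, e2, e4, e5]; ring)
  have t3 := hG (-1) (1 - q^(2*j+1+1)) (1-q) (qpoch q q (2*j+2)) (qpoch q q (2*j+1) * (1-q))
      (qpoch q (q^2) (2*j+1+1) * qpoch q (q^2) (j+1)) q (qpoch q q (2*j+1+1) * qpoch (q^2) (q^2) (j+1))
      (-(q * (1 - q^(2*j+2)) * B * (1 - q^(2*j+1)) * (1 - q^(2*j+1)) * (1 - q^(2*j+2)) * Po * (1 - q^(4*j+3)) * Pj))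
      ((1-q) * (1-q) * B * B * (1 - q^(2*j+1)) * (1 - q^(2*j+1)) * (1 - q^(2*j+2)) * (1 - q^(2*j+2)) * E)
      one_sub_q_ne (mul_ne_zero (P1_ne _) one_sub_q_ne)
      (mul_ne_zero (P1_ne _) (P2_ne _)) hD
      (by rw [e1, e2, e3, e4, e5]; ring)
  have t4 := hH (1 - q^(2*j+1)) (1-q) (Po * Pj) (qpoch q q (2*j+1) * E)
      ((1 - q^(2*j+1)) * Po * Pj * ((1-q) * B * (1 - q^(2*j+1)) * (1 - q^(2*j+2)) * (1 - q^(2*j+2))))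
      ((1-q) * (1-q) * B * B * (1 - q^(2*j+1)) * (1 - q^(2*j+1)) * (1 - q^(2*j+2)) * (1 - q^(2*j+2)) * E)
      one_sub_q_ne (mul_ne_zero (P1_ne _) (P2_ne _)) hD
      (by rw [e1]; ring)
  rw [t1, t3, t4, sub_zero, div_sub_div_same, div_eq_div_iff hD hD]
  ring

lemma caseC (i : ℕ) :
    F15 (2*i+2) (i+1) - F15 (2*i+2) (i+2)
      = G15 (2*i+2+1) (i+2) - G15 (2*i+2) (i+2) := by
  rw [F15_zero (2*i+2) (i+2) (by omega), G15_zero (2*i+2) (i+2) (by omega)]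
  rw [F15, G15]
  rw [show (3 * ((2*i+2 : ℕ) : ℤ) - 2 * ((i+1 : ℕ) : ℤ) + 1) = ((4*i+5 : ℕ) : ℤ) by
    push_cast; ring]
  rw [qint_natCast, qint_natCast]
  rw [show ((2*i+2+1 : ℕ) : ℤ) + 1 - 2 * ((i+2 : ℕ) : ℤ) = ((0 : ℕ) : ℤ) by push_cast; ring]
  rw [zpow_natCast, pow_zero]
  rw [show 2*(2*i+2) - 2*(i+1) = 2*i+2 from by omega]
  rw [show 2*(2*i+2+1) - 2*(i+2) = 2*i+2 from by omega]
  rw [show (2*i+2) - (i+1) = i+1 from by omega]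
  rw [show (2*i+2+1) - (i+2) = i+1 from by omega]
  rw [show (2*i+2+1) - 1 = 2*i+2 from by omega]
  rw [qbin_eq _ _ (by omega)]
  rw [show (2*i+2) - (2*i+2) = 0 from by omega]
  rw [qpoch_zero, mul_one, div_self (P1_ne (2*i+2))]
  have s1 : (-1 : RatFunc ℚ) ^ (2*i+2) = 1 := by
    rw [show 2*i+2 = 2*(i+1)+0 from by ring, neg_one_pow_shift, pow_zero]
  have s2 : (-1 : RatFunc ℚ) ^ (2*i+2+1+1) = 1 := by
    rw [show 2*i+2+1+1 = 2*(i+2)+0 from by ring, neg_one_pow_shift, pow_zero]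
  rw [s1, s2]
  have e1 : qpoch q q (2*i+2+1) = qpoch q q (2*i+2) * (1 - q ^ (2*i+3)) := by
    rw [P1_succ]
  have e2 : qpoch q (q^2) (2*i+2+1) = qpoch q (q^2) (2*i+2) * (1 - q ^ (4*i+5)) := by
    rw [Podd_succ]; ring_nf
  rw [e1, e2]
  have h1 := P1_ne (2*i+2)
  have h2 := Podd_ne (2*i+2)
  have h3 := Podd_ne (i+1)
  have h4 := P2_ne (i+1)
  have h5 := one_sub_q_ne
  have h6 := one_sub_q_pow_ne (2*i+3) (by omega)
  have h7 := one_sub_q_pow_ne (4*i+5) (by omega)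
  rw [sub_zero]
  field_simp
  ring


theorem q_wz_pair_two (n k : ℕ) (hk : 1 ≤ k) (hkn : k ≤ n) :
    F15 n (k - 1) - F15 n k = G15 (n + 1) k - G15 n k := by
  obtain ⟨j, rfl⟩ : ∃ j, k = j + 1 := ⟨k - 1, by omega⟩
  simp only [Nat.add_sub_cancel]
  rcases Nat.lt_or_ge n (2*j) with h1 | h1
  · rw [F15_zero n j (by omega), F15_zero n (j+1) (by omega),
      G15_zero (n+1) (j+1) (by omega), G15_zero n (j+1) (by omega)]
  · rcases Nat.lt_or_ge n (2*j+1) with h2 | h2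
    · obtain rfl : n = 2*j := by omega
      obtain ⟨i, rfl⟩ : ∃ i, j = i + 1 := ⟨j - 1, by omega⟩
      rw [show 2*(i+1) = 2*i+2 from by ring, show i+1+1 = i+2 from rfl]
      exact caseC i
    · rcases Nat.lt_or_ge n (2*j+2) with h3 | h3
      · obtain rfl : n = 2*j+1 := by omega
        exact caseB j
      · obtain ⟨d, rfl⟩ : ∃ d, n = 2*j+2+d := ⟨n - (2*j+2), by omega⟩
        exact caseA j d
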